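/- arXiv:math/0511119 — 6 statements merged into one kernel-verified Lean document; each statement's English description precedes it below -/
import Mathlib

section
/- Let d ≥ 3 be an integer and s a real number with 1 ≤ s ≤ d+1. Define f(y) = (d+1)(s+1) − (d+2)(d+1+2s)·y + (d+3)(d+1+s)·y² + y^{d+2}·(−(d+3)(d+1−s) + (d+2)(d+1−2s)·y + (d+1)(s−1)·y²). Then f(y) > 0 for all y > 1. -/
private lemma aux_deriv (c : ℝ) (n : ℕ) (x : ℝ) :
    HasDerivAt (fun x : ℝ => c * x ^ (n + 1)) (c * ((n : ℝ) + 1) * x ^ n) x := by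
  have h := (hasDerivAt_pow (n + 1) x).const_mul c
  simpa [Nat.add_sub_cancel, Nat.cast_add, Nat.cast_one, mul_assoc] using h

theorem stmt4 (d : ℕ) (hd : 3 ≤ d) (s : ℝ) (hs1 : 1 ≤ s) (hs2 : s ≤ d + 1)
    (y : ℝ) (hy : 1 < y) :
    0 < (d+1)*(s+1) - (d+2)*(d+1+2*s)*y + (d+3)*(d+1+s)*y^2
      + y^(d+2) * (-(d+3)*(d+1-s) + (d+2)*(d+1-2*s)*y + (d+1)*(s-1)*y^2) := by
  obtain ⟨k, rfl⟩ : ∃ k, d = k + 3 := ⟨d - 3, by omega⟩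
  set K : ℝ := (k : ℝ) with hKdef
  have hK0 : (0:ℝ) ≤ K := Nat.cast_nonneg k
  set F : ℝ → ℝ := fun x => (K+4)*(s+1) + (-(K+5)*(K+4+2*s))*x^(0+1) + ((K+6)*(K+4+s))*x^(1+1)
      + (-(K+6)*(K+4-s))*x^(k+4+1) + ((K+5)*(K+4-2*s))*x^(k+5+1)
      + ((K+4)*(s-1))*x^(k+6+1) with hFdef
  set F1 : ℝ → ℝ := fun x => (-(K+5)*(K+4+2*s)) + ((K+6)*(K+4+s))*2*x^(0+1)
      + (-(K+6)*(K+4-s))*(K+5)*x^(k+3+1) + ((K+5)*(K+4-2*s))*(K+6)*x^(k+4+1)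
      + ((K+4)*(s-1))*(K+7)*x^(k+5+1) with hF1def
  set F2 : ℝ → ℝ := fun x => ((K+6)*(K+4+s))*2 + (-(K+6)*(K+4-s))*(K+5)*(K+4)*x^(k+2+1)
      + ((K+5)*(K+4-2*s))*(K+6)*(K+5)*x^(k+3+1)
      + ((K+4)*(s-1))*(K+7)*(K+6)*x^(k+4+1) with hF2def
  set F3 : ℝ → ℝ := fun x => (-(K+6)*(K+4-s))*(K+5)*(K+4)*(K+3)*x^(k+2)
      + ((K+5)*(K+4-2*s))*(K+6)*(K+5)*(K+4)*x^(k+3)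
      + ((K+4)*(s-1))*(K+7)*(K+6)*(K+5)*x^(k+4) with hF3def
  -- derivatives
  have hdF : ∀ x : ℝ, HasDerivAt F (F1 x) x := by
    intro x
    have h := (((((hasDerivAt_const x ((K+4)*(s+1))).add
        (aux_deriv (-(K+5)*(K+4+2*s)) 0 x)).add
        (aux_deriv ((K+6)*(K+4+s)) 1 x)).add
        (aux_deriv (-(K+6)*(K+4-s)) (k+4) x)).add
        (aux_deriv ((K+5)*(K+4-2*s)) (k+5) x)).add
        (aux_deriv ((K+4)*(s-1)) (k+6) x)
    convert h using 1
    · rfl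
    · rfl
    · rfl
    simp only [hF1def, hKdef]
    push_cast
    ring
  have hdF1 : ∀ x : ℝ, HasDerivAt F1 (F2 x) x := by
    intro x
    have h := ((((hasDerivAt_const x (-(K+5)*(K+4+2*s))).add
        (aux_deriv (((K+6)*(K+4+s))*2) 0 x)).add
        (aux_deriv ((-(K+6)*(K+4-s))*(K+5)) (k+3) x)).add
        (aux_deriv (((K+5)*(K+4-2*s))*(K+6)) (k+4) x)).add
        (aux_deriv (((K+4)*(s-1))*(K+7)) (k+5) x)
    convert h using 1
    · rfl
    · rfl
    · rfl
    simp only [hF2def, hKdef]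
    push_cast
    ring
  have hdF2 : ∀ x : ℝ, HasDerivAt F2 (F3 x) x := by
    intro x
    have h := (((hasDerivAt_const x (((K+6)*(K+4+s))*2)).add
        (aux_deriv ((-(K+6)*(K+4-s))*(K+5)*(K+4)) (k+2) x)).add
        (aux_deriv (((K+5)*(K+4-2*s))*(K+6)*(K+5)) (k+3) x)).add
        (aux_deriv (((K+4)*(s-1))*(K+7)*(K+6)) (k+4) x)
    convert h using 1
    · rfl
    · rfl
    · rfl
    simp only [hF3def, hKdef]
    push_cast
    ring
  -- values at 1
  have hF_one : F 1 = 0 := by simp only [hFdef, one_pow]; ring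
  have hF1_one : F1 1 = 0 := by simp only [hF1def, one_pow]; ring
  have hF2_one : F2 1 = 0 := by simp only [hF2def, one_pow]; ring
  -- third derivative positive on (1, ∞)
  have hF3_pos : ∀ x : ℝ, 1 < x → 0 < F3 x := by
    intro x hx
    have hfac : F3 x = (K+4)*(K+5)*(K+6)*x^(k+2) *
        ((K+1) + ((K+6)*(K+1)+4*s)*(x-1) + (K+7)*(s-1)*(x-1)^2) := by
      simp only [hF3def]; ring
    rw [hfac]
    have hx0 : (0:ℝ) < x := lt_trans one_pos hx
    have hx1 : (0:ℝ) < x - 1 := by linarith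
    have hQ : 0 < (K+1) + ((K+6)*(K+1)+4*s)*(x-1) + (K+7)*(s-1)*(x-1)^2 := by
      have h1 : (0:ℝ) < K + 1 := by linarith
      have h2 : (0:ℝ) < ((K+6)*(K+1)+4*s)*(x-1) := by
        apply mul_pos _ hx1
        nlinarith
      have h3 : (0:ℝ) ≤ (K+7)*(s-1)*(x-1)^2 := by
        apply mul_nonneg (mul_nonneg (by linarith) (by linarith)) (sq_nonneg _)
      linarith
    have hpre : (0:ℝ) < (K+4)*(K+5)*(K+6)*x^(k+2) := by
      apply mul_pos (mul_pos (mul_pos (by linarith) (by linarith)) (by linarith))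
      exact pow_pos hx0 _
    exact mul_pos hpre hQ
  -- generic step: if derivative positive on Ioi 1 and value 0 at 1, then positive on Ioi 1
  have step : ∀ (G G' : ℝ → ℝ), (∀ x : ℝ, HasDerivAt G (G' x) x) → G 1 = 0 →
      (∀ x : ℝ, 1 < x → 0 < G' x) → ∀ x : ℝ, 1 < x → 0 < G x := by
    intro G G' hG hG1 hG'pos x hx
    have hmono : StrictMonoOn G (Set.Ici (1:ℝ)) := by
      apply strictMonoOn_of_deriv_pos (convex_Ici 1)
      · intro t _
        exact (hG t).differentiableAt.continuousAt.continuousWithinAt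
      · intro t ht
        rw [interior_Ici] at ht
        rw [(hG t).deriv]
        exact hG'pos t ht
    have := hmono (Set.self_mem_Ici) (Set.mem_Ici.mpr (le_of_lt hx)) hx
    rwa [hG1] at this
  have hF2_pos := step F2 F3 hdF2 hF2_one hF3_pos
  have hF1_pos := step F1 F2 hdF1 hF1_one hF2_pos
  have hF_pos := step F F1 hdF hF_one hF1_pos
  have hFy := hF_pos y hy
  have : (((k:ℝ)+3)+1)*(s+1) - (((k:ℝ)+3)+2)*(((k:ℝ)+3)+1+2*s)*y + (((k:ℝ)+3)+3)*(((k:ℝ)+3)+1+s)*y^2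
      + y^(k+3+2) * (-(((k:ℝ)+3)+3)*(((k:ℝ)+3)+1-s) + (((k:ℝ)+3)+2)*(((k:ℝ)+3)+1-2*s)*y + (((k:ℝ)+3)+1)*(s-1)*y^2) = F y := by
    simp only [hFdef, hKdef]
    ring
  push_cast
  rw [this]
  exact hFy
end

section
/- Let p: [−1,1] → ℝ be continuous with p > 0 on (−1,1), let d₀, d_∞ be nonnegative integers, and let c be a real number. Define G(k) = ∫_{−1}^{1} e^{kt}·((d₀+1)(1−t) − (d_∞+1)(1+t))·p(t) dt. Then there exists t₀ ∈ (−1,1) such that (d₀+1)(1−t) − (d_∞+1)(1+t) = −(d₀+d_∞+2)(t − t₀)·(constant sign), and G has exactly one real zero; i.e., there is a unique real number c with G(c) = 0. -/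
open intervalIntegral Real Set

lemma key_aux (h : ℝ → ℝ) (hh : Continuous h) (c : ℝ) (hc : c ∈ Set.Ioo (-1:ℝ) 1)
    (hneg : ∀ t ∈ Set.Ioo c 1, h t < 0) (hle : ∀ t ∈ Set.Icc c (1:ℝ), h t ≤ 0) :
    ∃ k : ℝ, (∫ t in (-1:ℝ)..1, Real.exp (k*(t-c)) * h t) < 0 := by
  obtain ⟨hc1, hc2⟩ := hc
  set t₁ : ℝ := (c+1)/2 with ht₁def
  have ht₁c : c < t₁ := by simp only [ht₁def]; linarith
  have ht₁1 : t₁ < 1 := by simp only [ht₁def]; linarith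
  have hδ : 0 < t₁ - c := by linarith
  obtain ⟨M, hM⟩ := (isCompact_Icc (a := (-1:ℝ)) (b := 1)).exists_bound_of_continuousOn
    hh.continuousOn
  have hM0 : 0 ≤ M := le_trans (norm_nonneg _) (hM c ⟨hc1.le, hc2.le⟩)
  set A := ∫ t in t₁..1, h t with hAdef
  have hA : A < 0 := by
    have hpos : 0 < ∫ t in t₁..1, -h t := by
      apply intervalIntegral.intervalIntegral_pos_of_pos_on
        (hh.neg.intervalIntegrable _ _)
      · intro x hx
        have : x ∈ Set.Ioo c 1 := ⟨lt_trans ht₁c hx.1, hx.2⟩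
        simpa using hneg x this
      · exact ht₁1
    rw [intervalIntegral.integral_neg] at hpos
    linarith
  have hAbound : -A ≤ 2*(M+1) := by
    have hnorm : ‖A‖ ≤ M * |1 - t₁| := by
      apply intervalIntegral.norm_integral_le_of_norm_le_const
      intro x hx
      rw [Set.uIoc_of_le ht₁1.le] at hx
      exact hM x ⟨by linarith [hx.1, ht₁c, hc1], hx.2⟩
    have h1 : |1 - t₁| ≤ 2 := by rw [abs_of_nonneg (by linarith)]; linarith [hc1]
    have : -A ≤ ‖A‖ := by rw [Real.norm_eq_abs]; exact neg_le_abs A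
    nlinarith
  set k : ℝ := Real.log (2*(M+1) / (-A)) / (t₁ - c) with hkdef
  have hargpos : 0 < 2*(M+1) / (-A) := div_pos (by linarith) (by linarith)
  have harg1 : 1 ≤ 2*(M+1) / (-A) := (one_le_div (by linarith)).2 hAbound
  have hk0 : 0 ≤ k := div_nonneg (Real.log_nonneg harg1) hδ.le
  have hek : Real.exp (k*(t₁-c)) = 2*(M+1) / (-A) := by
    rw [hkdef, div_mul_cancel₀ _ hδ.ne', Real.exp_log hargpos]
  refine ⟨k, ?_⟩
  have int1 : IntervalIntegrable (fun t => Real.exp (k*(t-c)) * h t) MeasureTheory.volume (-1) t₁ :=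
    (((Real.continuous_exp.comp (by fun_prop)).mul hh)).intervalIntegrable _ _
  have int2 : IntervalIntegrable (fun t => Real.exp (k*(t-c)) * h t) MeasureTheory.volume t₁ 1 :=
    (((Real.continuous_exp.comp (by fun_prop)).mul hh)).intervalIntegrable _ _
  have hsplit : (∫ t in (-1:ℝ)..1, Real.exp (k*(t-c)) * h t)
      = (∫ t in (-1:ℝ)..t₁, Real.exp (k*(t-c)) * h t)
        + ∫ t in t₁..(1:ℝ), Real.exp (k*(t-c)) * h t :=
    (intervalIntegral.integral_add_adjacent_intervals int1 int2).symm
  have bound1 : (∫ t in (-1:ℝ)..t₁, Real.exp (k*(t-c)) * h t) ≤ M * (t₁ - (-1)) := by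
    have := intervalIntegral.integral_mono_on (a := (-1:ℝ)) (b := t₁)
      (f := fun t => Real.exp (k*(t-c)) * h t) (g := fun _ => M)
      (by linarith [hc1]) int1 (intervalIntegrable_const) ?_
    · rw [intervalIntegral.integral_const] at this
      calc (∫ t in (-1:ℝ)..t₁, Real.exp (k*(t-c)) * h t) ≤ (t₁ - (-1)) • M := this
        _ = M * (t₁ - (-1)) := by rw [smul_eq_mul]; ring
    · intro t ht
      by_cases hth : h t ≤ 0
      · exact le_trans (mul_nonpos_of_nonneg_of_nonpos (Real.exp_pos _).le hth) hM0
      · push_neg at hth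
        have htc : t < c := by
          by_contra hcon
          push_neg at hcon
          exact absurd (hle t ⟨hcon, by linarith [ht.2]⟩) (not_le.2 hth)
        have hexp : Real.exp (k*(t-c)) ≤ 1 := by
          rw [← Real.exp_zero]
          exact Real.exp_le_exp.2 (mul_nonpos_of_nonneg_of_nonpos hk0 (by linarith))
        calc Real.exp (k*(t-c)) * h t ≤ 1 * h t := by
              exact mul_le_mul_of_nonneg_right hexp hth.le
          _ = h t := one_mul _
          _ ≤ ‖h t‖ := le_abs_self _
          _ ≤ M := hM t ⟨ht.1, by linarith [ht.2]⟩
  have bound2 : (∫ t in t₁..(1:ℝ), Real.exp (k*(t-c)) * h t) ≤ Real.exp (k*(t₁-c)) * A := by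
    have hmono := intervalIntegral.integral_mono_on (a := t₁) (b := (1:ℝ))
      (f := fun t => Real.exp (k*(t-c)) * h t) (g := fun t => Real.exp (k*(t₁-c)) * h t)
      ht₁1.le int2 ((continuous_const.mul hh).intervalIntegrable _ _) ?_
    · calc (∫ t in t₁..(1:ℝ), Real.exp (k*(t-c)) * h t)
          ≤ ∫ t in t₁..(1:ℝ), Real.exp (k*(t₁-c)) * h t := hmono
        _ = Real.exp (k*(t₁-c)) * A := by rw [intervalIntegral.integral_const_mul]
    · intro t ht
      have hth : h t ≤ 0 := hle t ⟨le_trans ht₁c.le ht.1, ht.2⟩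
      have hexp : Real.exp (k*(t₁-c)) ≤ Real.exp (k*(t-c)) :=
        Real.exp_le_exp.2 (mul_le_mul_of_nonneg_left (by linarith [ht.1]) hk0)
      exact mul_le_mul_of_nonpos_right hexp hth
  have hekA : Real.exp (k*(t₁-c)) * A = -(2*(M+1)) := by
    rw [hek, div_mul_eq_mul_div, mul_comm, ← div_mul_eq_mul_div, div_neg, div_self hA.ne]
    ring
  have hfin : M * (t₁ - (-1)) ≤ 2*M := by nlinarith [hc1, ht₁1]
  rw [hsplit]
  linarith

open intervalIntegral Real in
theorem stmt5 (p : ℝ → ℝ) (hp : ContinuousOn p (Set.Icc (-1) 1))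
    (hpos : ∀ t ∈ Set.Ioo (-1:ℝ) 1, 0 < p t)
    (d₀ dinf : ℕ) (G : ℝ → ℝ)
    (hG : ∀ k, G k = ∫ t in (-1:ℝ)..1,
      Real.exp (k*t) * ((d₀+1)*(1-t) - (dinf+1)*(1+t)) * p t) :
    (∃ t₀ ∈ Set.Ioo (-1:ℝ) 1, ∀ t : ℝ,
      (d₀+1)*(1-t) - (dinf+1)*(1+t) = -((d₀:ℝ)+dinf+2) * (t - t₀)) ∧
    ∃! c : ℝ, G c = 0 := by
  have hd0 : (0:ℝ) ≤ (d₀:ℝ) := Nat.cast_nonneg _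
  have hdi : (0:ℝ) ≤ (dinf:ℝ) := Nat.cast_nonneg _
  set D : ℝ := (d₀:ℝ) + dinf + 2 with hDdef
  have hD : 0 < D := by positivity
  set t₀ : ℝ := ((d₀:ℝ) - dinf) / D with ht₀def
  have hDt₀ : D * t₀ = (d₀:ℝ) - dinf := by
    rw [ht₀def]; field_simp
  have ht₀ : t₀ ∈ Set.Ioo (-1:ℝ) 1 := by
    constructor
    · rw [ht₀def, lt_div_iff₀ hD]; linarith
    · rw [ht₀def, div_lt_one hD]; linarith
  have hlin : ∀ t : ℝ, ((d₀:ℝ)+1)*(1-t) - ((dinf:ℝ)+1)*(1+t) = -D * (t - t₀) := by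
    intro t; linear_combination -hDt₀
  refine ⟨⟨t₀, ht₀, hlin⟩, ?_⟩
  -- continuous extension of p
  set q : ℝ → ℝ := fun t => p (max (-1) (min 1 t)) with hqdef
  have hq : Continuous q := hp.comp_continuous
    (continuous_const.max (continuous_const.min continuous_id))
    (fun x => ⟨le_max_left _ _, max_le (by norm_num) (min_le_left _ _)⟩)
  have hqp : ∀ t ∈ Set.Icc (-1:ℝ) 1, q t = p t := by
    intro t ht
    simp only [hqdef]
    rw [min_eq_right ht.2, max_eq_right ht.1]
  have hqpos : ∀ t ∈ Set.Ioo (-1:ℝ) 1, 0 < q t := by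
    intro t ht
    rw [hqp t ⟨ht.1.le, ht.2.le⟩]; exact hpos t ht
  -- p is nonneg at the endpoints, hence on the closed interval
  have hpnn : ∀ t ∈ Set.Icc (-1:ℝ) 1, 0 ≤ p t := by
    have hne1 : (nhdsWithin (1:ℝ) (Set.Ioo (-1:ℝ) 1)).NeBot := by
      apply mem_closure_iff_nhdsWithin_neBot.1
      rw [closure_Ioo (by norm_num : (-1:ℝ) ≠ 1)]
      exact ⟨by norm_num, le_refl 1⟩
    have hnem1 : (nhdsWithin (-1:ℝ) (Set.Ioo (-1:ℝ) 1)).NeBot := by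
      apply mem_closure_iff_nhdsWithin_neBot.1
      rw [closure_Ioo (by norm_num : (-1:ℝ) ≠ 1)]
      exact ⟨le_refl _, by norm_num⟩
    have hp1 : 0 ≤ p 1 :=
      ge_of_tendsto ((hp 1 ⟨by norm_num, le_refl 1⟩).mono_left
        (nhdsWithin_mono _ Set.Ioo_subset_Icc_self))
        (Filter.eventually_of_mem self_mem_nhdsWithin (fun t ht => (hpos t ht).le))
    have hpm1 : 0 ≤ p (-1) :=
      ge_of_tendsto ((hp (-1) ⟨le_refl _, by norm_num⟩).mono_left
        (nhdsWithin_mono _ Set.Ioo_subset_Icc_self))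
        (Filter.eventually_of_mem self_mem_nhdsWithin (fun t ht => (hpos t ht).le))
    intro t ht
    rcases eq_or_lt_of_le ht.1 with h | h
    · rw [← h]; exact hpm1
    · rcases eq_or_lt_of_le ht.2 with h' | h'
      · rw [h']; exact hp1
      · exact (hpos t ⟨h, h'⟩).le
  have hqnn : ∀ t ∈ Set.Icc (-1:ℝ) 1, 0 ≤ q t := by
    intro t ht; rw [hqp t ht]; exact hpnn t ht
  set g : ℝ → ℝ := fun t => -D * (t - t₀) * q t with hgdef
  have hg : Continuous g := by fun_prop
  set H : ℝ → ℝ := fun k => ∫ t in (-1:ℝ)..1, Real.exp (k*(t-t₀)) * g t with hHdef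
  -- relation between G and H
  have hGH : ∀ k, G k = Real.exp (k*t₀) * H k := by
    intro k
    rw [hG k, hHdef]
    simp only
    rw [← intervalIntegral.integral_const_mul]
    apply intervalIntegral.integral_congr
    intro t ht
    rw [Set.uIcc_of_le (by norm_num : (-1:ℝ) ≤ 1)] at ht
    simp only [hgdef]
    rw [hlin t, ← hqp t ht]
    have : Real.exp (k*t) = Real.exp (k*t₀) * Real.exp (k*(t-t₀)) := by
      rw [← Real.exp_add]; congr 1; ring
    rw [this]; ring
  -- H is strictly antitone
  have hanti : StrictAnti H := by
    intro k₁ k₂ hk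
    have hint : ∀ (k a b : ℝ), IntervalIntegrable
        (fun t => Real.exp (k*(t-t₀)) * g t) MeasureTheory.volume a b := by
      intro k a b
      exact (((Real.continuous_exp.comp (by fun_prop)).mul hg)).intervalIntegrable _ _
    have hdiff : H k₁ - H k₂ = ∫ t in (-1:ℝ)..1,
        (Real.exp (k₁*(t-t₀)) - Real.exp (k₂*(t-t₀))) * g t := by
      simp only [hHdef]
      rw [← intervalIntegral.integral_sub (hint k₁ _ _) (hint k₂ _ _)]
      apply intervalIntegral.integral_congr
      intro t _; ring
    set F : ℝ → ℝ := fun t => (Real.exp (k₁*(t-t₀)) - Real.exp (k₂*(t-t₀))) * g t with hFdef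
    have hFint : ∀ a b : ℝ, IntervalIntegrable F MeasureTheory.volume a b := by
      intro a b; exact (by fun_prop : Continuous F).intervalIntegrable _ _
    have hsplit : (∫ t in (-1:ℝ)..1, F t)
        = (∫ t in (-1:ℝ)..t₀, F t) + ∫ t in t₀..(1:ℝ), F t :=
      (intervalIntegral.integral_add_adjacent_intervals (hFint _ _) (hFint _ _)).symm
    have hpos1 : 0 < ∫ t in (-1:ℝ)..t₀, F t := by
      apply intervalIntegral.intervalIntegral_pos_of_pos_on (hFint _ _) _ ht₀.1
      intro t ht
      have hq' : 0 < q t := hqpos t ⟨ht.1, lt_trans ht.2 ht₀.2⟩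
      have he : Real.exp (k₂*(t-t₀)) < Real.exp (k₁*(t-t₀)) :=
        Real.exp_lt_exp.2 (mul_lt_mul_of_neg_right hk (by linarith [ht.2]))
      simp only [hFdef, hgdef]
      have h1 : 0 < -D * (t - t₀) := by nlinarith [ht.2]
      exact mul_pos (sub_pos.2 he) (mul_pos h1 hq')
    have hpos2 : 0 < ∫ t in t₀..(1:ℝ), F t := by
      apply intervalIntegral.intervalIntegral_pos_of_pos_on (hFint _ _) _ ht₀.2
      intro t ht
      have hq' : 0 < q t := hqpos t ⟨lt_trans ht₀.1 ht.1, ht.2⟩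
      have he : Real.exp (k₁*(t-t₀)) < Real.exp (k₂*(t-t₀)) :=
        Real.exp_lt_exp.2 (mul_lt_mul_of_pos_right hk (by linarith [ht.1]))
      simp only [hFdef, hgdef]
      have h1 : -D * (t - t₀) < 0 := by nlinarith [ht.1]
      exact mul_pos_of_neg_of_neg (sub_neg.2 he) (mul_neg_of_neg_of_pos h1 hq')
    have : 0 < H k₁ - H k₂ := by rw [hdiff]; rw [hsplit]; linarith
    linarith
  -- H is continuous
  have HC : Continuous H := by
    rw [hHdef]
    exact intervalIntegral.continuous_parametric_intervalIntegral_of_continuous'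
      (f := fun k t => Real.exp (k*(t-t₀)) * g t) (by fun_prop) (-1) 1
  -- H is eventually negative
  obtain ⟨kp, hkp⟩ := key_aux g hg t₀ ht₀
    (fun t ht => mul_neg_of_neg_of_pos (by nlinarith [ht.1])
      (hqpos t ⟨lt_trans ht₀.1 ht.1, ht.2⟩))
    (fun t ht => mul_nonpos_of_nonpos_of_nonneg (by nlinarith [ht.1])
      (hqnn t ⟨le_trans ht₀.1.le ht.1, ht.2⟩))
  have hHkp : H kp < 0 := hkp
  -- H is eventually positive, via reflection
  obtain ⟨k', hk'⟩ := key_aux (fun t => -g (-t)) (by fun_prop) (-t₀)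
    (⟨by linarith [ht₀.2], by linarith [ht₀.1]⟩)
    (by
      intro t ht
      simp only [hgdef, neg_neg]
      have hq' : 0 < q (-t) :=
        hqpos (-t) ⟨by linarith [ht.2], by linarith [ht.1, ht₀.2]⟩
      have h1 : 0 < D * (t + t₀) := mul_pos hD (by linarith [ht.1])
      nlinarith [mul_pos h1 hq'])
    (by
      intro t ht
      simp only [hgdef, neg_neg]
      have hq' : 0 ≤ q (-t) :=
        hqnn (-t) ⟨by linarith [ht.2], by linarith [ht.1, ht₀.2]⟩
      have h1 : 0 ≤ D * (t + t₀) := mul_nonneg hD.le (by linarith [ht.1])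
      nlinarith [mul_nonneg h1 hq'])
  have hHkn : 0 < H (-k') := by
    have step1 : (∫ t in (-1:ℝ)..1, Real.exp (k'*(t-(-t₀))) * (-g (-t)))
        = ∫ t in (-1:ℝ)..1, -(Real.exp ((-k')*((-t)-t₀)) * g (-t)) := by
      apply intervalIntegral.integral_congr
      intro t _
      show Real.exp (k'*(t-(-t₀))) * (-g (-t)) = -(Real.exp ((-k')*((-t)-t₀)) * g (-t))
      rw [show k'*(t-(-t₀)) = (-k')*((-t)-t₀) by ring]
      ring
    have step2 : (∫ t in (-1:ℝ)..1, Real.exp ((-k')*((-t)-t₀)) * g (-t))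
        = ∫ t in (-1:ℝ)..1, Real.exp ((-k')*(t-t₀)) * g t := by
      have := intervalIntegral.integral_comp_neg (a := (-1:ℝ)) (b := 1)
        (f := fun x => Real.exp ((-k')*(x-t₀)) * g x)
      simpa using this
    rw [step1, intervalIntegral.integral_neg, step2] at hk'
    have hrfl : H (-k') = ∫ t in (-1:ℝ)..1, Real.exp ((-k')*(t-t₀)) * g t := rfl
    rw [hrfl]
    linarith
  -- assemble
  have hklt : -k' < kp := by
    by_contra hcon
    push_neg at hcon
    have := hanti.antitone hcon
    linarith
  obtain ⟨c, hcmem, hc0⟩ := intermediate_value_Icc' hklt.le HC.continuousOn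
    (Set.mem_Icc.2 ⟨hkp.le, hHkn.le⟩)
  refine ⟨c, ?_, ?_⟩
  · show G c = 0
    rw [hGH c, hc0, mul_zero]
  · intro y hy
    have hHy : H y = 0 := by
      have := hGH y
      rw [hy] at this
      have hexp : Real.exp (y*t₀) ≠ 0 := (Real.exp_pos _).ne'
      field_simp at this
      exact (mul_eq_zero.1 this.symm).resolve_left hexp
    exact hanti.injective (by rw [hHy, hc0])
end

section
/- Let p: [−1,1] → ℝ be continuous with p > 0 on (−1,1), let d₀, d_∞ be nonnegative integers, c a real number with ∫_{−1}^{1} e^{ct}((d₀+1)(1−t) − (d_∞+1)(1+t))p(t)dt = 0, and define F(z) = e^{−cz}·∫_{−1}^{z} e^{ct}·((d₀+1)(1−t) − (d_∞+1)(1+t))·p(t) dt. Then F(−1) = F(1) = 0 and F(z) > 0 for all z ∈ (−1,1). -/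
open intervalIntegral Real in
theorem stmt6 (p : ℝ → ℝ) (hp : ContinuousOn p (Set.Icc (-1) 1))
    (hpos : ∀ t ∈ Set.Ioo (-1:ℝ) 1, 0 < p t)
    (d₀ dinf : ℕ) (c : ℝ)
    (hc : (∫ t in (-1:ℝ)..1,
      Real.exp (c*t) * ((d₀+1)*(1-t) - (dinf+1)*(1+t)) * p t) = 0)
    (F : ℝ → ℝ)
    (hF : ∀ z, F z = Real.exp (-c*z) * ∫ t in (-1:ℝ)..z,
      Real.exp (c*t) * ((d₀+1)*(1-t) - (dinf+1)*(1+t)) * p t) :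
    F (-1) = 0 ∧ F 1 = 0 ∧ ∀ z ∈ Set.Ioo (-1:ℝ) 1, 0 < F z := by
  set g : ℝ → ℝ := fun t =>
    Real.exp (c*t) * ((d₀+1)*(1-t) - (dinf+1)*(1+t)) * p t with hg
  have hgc : ContinuousOn g (Set.Icc (-1) 1) := by
    apply ContinuousOn.mul _ hp
    apply Continuous.continuousOn
    continuity
  have hint : ∀ u v : ℝ, u ∈ Set.Icc (-1:ℝ) 1 → v ∈ Set.Icc (-1:ℝ) 1 →
      IntervalIntegrable g MeasureTheory.volume u v := by
    intro u v hu hv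
    exact (hgc.mono (Set.uIcc_subset_Icc hu hv)).intervalIntegrable
  refine ⟨by simp [hF], by simp [hF, hc], ?_⟩
  intro z hz
  rw [hF z]
  have hexp : 0 < Real.exp (-c*z) := Real.exp_pos _
  refine mul_pos hexp ?_
  set ts : ℝ := ((d₀:ℝ) - dinf) / ((d₀:ℝ) + dinf + 2) with hts
  have hden : (0:ℝ) < (d₀:ℝ) + dinf + 2 := by positivity
  have hqpos : ∀ t : ℝ, t < ts → 0 < ((d₀:ℝ)+1)*(1-t) - ((dinf:ℝ)+1)*(1+t) := by
    intro t ht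
    rw [hts, lt_div_iff₀ hden] at ht
    nlinarith
  have hqneg : ∀ t : ℝ, ts < t → ((d₀:ℝ)+1)*(1-t) - ((dinf:ℝ)+1)*(1+t) < 0 := by
    intro t ht
    rw [hts, div_lt_iff₀ hden] at ht
    nlinarith
  rcases le_or_gt z ts with hcase | hcase
  · -- g > 0 on (-1, z)
    apply intervalIntegral.intervalIntegral_pos_of_pos_on
      (hint (-1) z (by simp) ⟨le_of_lt hz.1, le_of_lt hz.2⟩)
    · intro x hx
      have hx1 : x ∈ Set.Ioo (-1:ℝ) 1 := ⟨hx.1, lt_trans hx.2 hz.2⟩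
      exact mul_pos (mul_pos (Real.exp_pos _)
        (hqpos x (lt_of_lt_of_le hx.2 hcase))) (hpos x hx1)
    · exact hz.1
  · -- ∫_{-1}^z g = - ∫_z^1 g and g < 0 on (z, 1)
    have hsplit : (∫ t in (-1:ℝ)..z, g t) + (∫ t in z..(1:ℝ), g t)
        = ∫ t in (-1:ℝ)..(1:ℝ), g t :=
      intervalIntegral.integral_add_adjacent_intervals
        (hint (-1) z (by simp) ⟨le_of_lt hz.1, le_of_lt hz.2⟩)
        (hint z 1 ⟨le_of_lt hz.1, le_of_lt hz.2⟩ (by simp))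
    rw [hc] at hsplit
    have hzeq : (∫ t in (-1:ℝ)..z, g t) = - ∫ t in z..(1:ℝ), g t := by
      linarith
    rw [hzeq]
    have : 0 < ∫ t in z..(1:ℝ), -g t := by
      apply intervalIntegral.intervalIntegral_pos_of_pos_on
        ((hint z 1 ⟨le_of_lt hz.1, le_of_lt hz.2⟩ (by simp)).neg)
      · intro x hx
        have hx1 : x ∈ Set.Ioo (-1:ℝ) 1 := ⟨lt_trans hz.1 hx.1, hx.2⟩
        have := mul_pos (mul_pos (Real.exp_pos (c*x))
          (neg_pos.mpr (hqneg x (lt_trans hcase hx.1)))) (hpos x hx1)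
        simp only [Pi.neg_apply, hg]
        nlinarith [this]
      · exact hz.2
    rw [intervalIntegral.integral_neg] at this
    linarith
end

section
/- If s₂ ≥ −2 and 0 < x < 2 − √3, then M(x, 1−x, 2, s₂) < 0, where M(x,y,2,s₂) = −96x⁶ − 112x⁵y + 72x⁴y² − 304x³y³ − 620x²y⁴ − 240xy⁵ − 50y⁶ − 25s₂·y(2x+y)(y² − 2x(x+y))². -/
theorem stmt14 (s₂ x : ℝ) (hs : -2 ≤ s₂) (hx0 : 0 < x) (hx1 : x < 2 - Real.sqrt 3) :
    (fun (X Y : ℝ) => -96*X^6 - 112*X^5*Y + 72*X^4*Y^2 - 304*X^3*Y^3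
      - 620*X^2*Y^4 - 240*X*Y^5 - 50*Y^6
      - 25*s₂*Y*(2*X+Y)*(Y^2 - 2*X*(X+Y))^2) x (1-x) < 0 := by
  have hs3 : (1.5:ℝ) < Real.sqrt 3 := by
    nlinarith [Real.sq_sqrt (by norm_num : (3:ℝ) ≥ 0), Real.sqrt_nonneg 3]
  have hx2 : x < 1/2 := by linarith
  simp only
  have hy : (0:ℝ) < 1 - x := by linarith
  have hmono : 0 ≤ (s₂ + 2) * ((1-x) * (2*x + (1-x)) * ((1-x)^2 - 2*x*(x+(1-x)))^2) := by
    apply mul_nonneg (by linarith)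
    exact mul_nonneg (mul_nonneg (by linarith) (by linarith)) (sq_nonneg _)
  have hquart : 11*x^4 - 96*x^3 + 194*x^2 - 85 < 0 := by nlinarith
  have hM2 : 4*x*(1-2*x)*(11*x^4 - 96*x^3 + 194*x^2 - 85) < 0 := by
    have h1 : 0 < x*(1-2*x) := mul_pos hx0 (by linarith)
    nlinarith
  nlinarith [hmono, hM2]
end

section
/- If s₂ < −1, then the function g(x) = 64x³ + 160x²(1−x) + 10(9 + 5s₂)x(1−x)² + 25(1 + s₂)(1−x)³ has exactly one zero in (0,1). -/
theorem stmt16 (s₂ : ℝ) (hs : s₂ < -1) :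
    ∃! x : ℝ, x ∈ Set.Ioo (0:ℝ) 1 ∧
      64*x^3 + 160*x^2*(1-x) + 10*(9 + 5*s₂)*x*(1-x)^2 + 25*(1 + s₂)*(1-x)^3 = 0 := by
  set f : ℝ → ℝ := fun x =>
    64*x^3 + 160*x^2*(1-x) + 10*(9 + 5*s₂)*x*(1-x)^2 + 25*(1 + s₂)*(1-x)^3 with hf
  have hcont : Continuous f := by fun_prop
  have key : ∀ x : ℝ, HasDerivAt f ((75*s₂-93)*x^2 + (110-50*s₂)*x + (15-25*s₂)) x := by
    intro x
    have h1 : HasDerivAt (fun y : ℝ => 1 - y) (-1) x := (hasDerivAt_id x).const_sub 1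
    have H := (((hasDerivAt_pow 3 x).const_mul (64:ℝ)).add
        (((hasDerivAt_pow 2 x).mul h1).const_mul 160)).add
        ((((hasDerivAt_id x).mul (h1.pow 2)).const_mul (10*(9+5*s₂))).add
         ((h1.pow 3).const_mul (25*(1+s₂))))
    have H2 := H.congr_of_eventuallyEq (f₁ := f)
      (Filter.Eventually.of_forall fun y => by simp only [hf, id_eq, Pi.add_apply, Pi.mul_apply, Pi.pow_apply]; ring)
    refine H2.congr_deriv ?_
    push_cast [id_eq, Pi.pow_apply]
    ring
  have hmono : StrictMonoOn f (Set.Icc 0 1) := by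
    apply strictMonoOn_of_deriv_pos (convex_Icc 0 1) hcont.continuousOn
    intro x hx
    rw [interior_Icc] at hx
    rw [(key x).deriv]
    have h1 : 0 < 1 - x := by linarith [hx.2]
    have h2 : 0 < 3*x + 1 := by linarith [hx.1]
    nlinarith [mul_pos h1 h2, mul_nonneg (mul_nonneg hx.1.le h1.le) hx.1.le,
      sq_nonneg x, mul_nonneg hx.1.le h1.le, sq_nonneg (1-x)]
  have hf0 : f 0 < 0 := by simp [hf]; nlinarith
  have hf1 : 0 < f 1 := by norm_num [hf]
  have hsub : Set.Ioo (0:ℝ) 1 ⊆ Set.Icc 0 1 := Set.Ioo_subset_Icc_self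
  obtain ⟨x, hx, hfx⟩ : ∃ x ∈ Set.Ioo (0:ℝ) 1, f x = 0 := by
    have := intermediate_value_Ioo (le_of_lt one_pos) hcont.continuousOn
      (a := (0:ℝ)) (b := 1)
    have h0 : (0:ℝ) ∈ Set.Ioo (f 0) (f 1) := ⟨hf0, hf1⟩
    obtain ⟨x, hx, hfx⟩ := this h0
    exact ⟨x, hx, hfx⟩
  refine ⟨x, ⟨hx, hfx⟩, ?_⟩
  rintro y ⟨hy, hfy⟩
  have hfy' : f y = 0 := hfy
  exact hmono.injOn (hsub hy) (hsub hx) (by rw [hfy', hfx])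
end

section
/- Suppose d₁, d₂ ≥ 1 are integers, not both equal to 1, and s₁ < 1, s₂ < 1 are real numbers. Define h_a(x₁,x₂) = ∫_{−1}^{1} (1+x₁t)^{d₁}(1+x₂t)^{d₂}·(x_a(x_a s_a − 1)(1−t²) + t(1−x_a²)) dt for a = 1,2. Then there exist x₁, x₂ ∈ (0,1) with h₁(x₁,x₂) = 0 = h₂(x₁,x₂). -/
open Real Set

noncomputable def xr (s r : ℝ) : ℝ := 2*r / (1 + Real.sqrt (1 + 4*r*(r - s)))

lemma disc_nonneg {s r : ℝ} (hs : s < 1) (hr : 0 ≤ r) : 0 ≤ 1 + 4*r*(r-s) := by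
  nlinarith [sq_nonneg (2*r - 1), mul_nonneg hr hr]

lemma xr_cont (s : ℝ) : Continuous (xr s) := by
  apply Continuous.div (by fun_prop) (by fun_prop)
  intro r
  positivity

lemma xr_nonneg {s r : ℝ} (hr : 0 ≤ r) : 0 ≤ xr s r := by
  unfold xr; positivity

lemma xr_le {s r : ℝ} (hr : 0 ≤ r) : xr s r ≤ 2*r := by
  unfold xr
  rw [div_le_iff₀ (by positivity)]
  nlinarith [Real.sqrt_nonneg (1 + 4*r*(r-s))]

lemma xr_spec {s r : ℝ} (hs : s < 1) (hr : 0 ≤ r) :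
    xr s r * (1 - s * xr s r) = r * (1 - (xr s r)^2) := by
  have hD := Real.sq_sqrt (disc_nonneg hs hr)
  set D := Real.sqrt (1 + 4*r*(r-s)) with hDdef
  have hDpos : 0 ≤ D := Real.sqrt_nonneg _
  have hden : (1 + D) ≠ 0 := by positivity
  unfold xr
  rw [← hDdef]
  field_simp
  linear_combination (-r) * hD

lemma xr_lt_one {s r : ℝ} (hs : s < 1) (hr : 0 ≤ r) : xr s r < 1 := by
  have hD := Real.sq_sqrt (disc_nonneg hs hr)
  set D := Real.sqrt (1 + 4*r*(r-s)) with hDdef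
  have hDpos : 0 ≤ D := Real.sqrt_nonneg _
  unfold xr
  rw [← hDdef, div_lt_one (by positivity)]
  -- 2r < 1 + D
  rcases le_or_gt (2*r) 1 with h | h
  · nlinarith
  · have hr' : 0 < r := by nlinarith
    by_contra hc
    push_neg at hc
    have hD1 : D ≤ 2*r - 1 := by linarith
    have hsq : D^2 ≤ (2*r-1)^2 := by nlinarith
    nlinarith [mul_pos hr' (sub_pos.mpr hs)]

lemma xr_pos {s r : ℝ} (hs : s < 1) (hr : 0 < r) : 0 < xr s r := by
  unfold xr; positivity

lemma xr_ge {s r : ℝ} (hs : s < 1) (hr : 0 ≤ r) (hsm : r * (r + |s|) ≤ 1/20) :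
    (20/21) * r ≤ xr s r := by
  have habs : 0 ≤ |s| := abs_nonneg s
  have hs' : -|s| ≤ s := neg_abs_le s
  have hDle : Real.sqrt (1 + 4*r*(r-s)) ≤ 1 + 2*r*(r+|s|) := by
    have h1 : 1 + 4*r*(r-s) ≤ (1 + 2*r*(r+|s|))^2 := by
      nlinarith [mul_nonneg hr habs, sq_nonneg (r*(r+|s|)), mul_nonneg hr hr]
    calc Real.sqrt (1 + 4*r*(r-s)) ≤ Real.sqrt ((1 + 2*r*(r+|s|))^2) := Real.sqrt_le_sqrt h1
      _ = 1 + 2*r*(r+|s|) := Real.sqrt_sq (by positivity)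
  unfold xr
  rw [le_div_iff₀ (by positivity)]
  nlinarith [hDle, mul_le_mul_of_nonneg_left hDle hr]

noncomputable def II (d₁ d₂ : ℕ) (x₁ x₂ : ℝ) : ℝ :=
  ∫ t in (-1:ℝ)..1, (1+x₁*t)^d₁ * (1+x₂*t)^d₂ * (1-t^2)

noncomputable def JJ (d₁ d₂ : ℕ) (x₁ x₂ : ℝ) : ℝ :=
  ∫ t in (-1:ℝ)..1, (1+x₁*t)^d₁ * (1+x₂*t)^d₂ * t

lemma II_pos {d₁ d₂ : ℕ} {x₁ x₂ : ℝ} (h₁ : x₁ ∈ Ico (0:ℝ) 1) (h₂ : x₂ ∈ Ico (0:ℝ) 1) :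
    0 < II d₁ d₂ x₁ x₂ := by
  apply intervalIntegral.intervalIntegral_pos_of_pos_on (Continuous.intervalIntegrable (by fun_prop) _ _)
  · intro t ht
    have b1 : 0 < 1 + x₁*t := by nlinarith [abs_nonneg t, h₁.1, h₁.2, ht.1, ht.2]
    have b2 : 0 < 1 + x₂*t := by nlinarith [h₂.1, h₂.2, ht.1, ht.2]
    have b3 : 0 < 1 - t^2 := by nlinarith [ht.1, ht.2]
    positivity
  · norm_num

lemma II_ge {d₁ d₂ : ℕ} {x₁ x₂ : ℝ} (h₁ : x₁ ∈ Icc (0:ℝ) 1) (h₂ : x₂ ∈ Icc (0:ℝ) 1) :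
    (2:ℝ)/3 ≤ II d₁ d₂ x₁ x₂ := by
  have hsplit : II d₁ d₂ x₁ x₂ =
      (∫ t in (-1:ℝ)..0, (1+x₁*t)^d₁ * (1+x₂*t)^d₂ * (1-t^2)) +
      (∫ t in (0:ℝ)..1, (1+x₁*t)^d₁ * (1+x₂*t)^d₂ * (1-t^2)) := by
    rw [II, ← intervalIntegral.integral_add_adjacent_intervals (b := (0:ℝ)) (Continuous.intervalIntegrable (by fun_prop) _ _) (Continuous.intervalIntegrable (by fun_prop) _ _)]
  have hA : 0 ≤ ∫ t in (-1:ℝ)..0, (1+x₁*t)^d₁ * (1+x₂*t)^d₂ * (1-t^2) := by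
    apply intervalIntegral.integral_nonneg (by norm_num)
    intro t ht
    have b1 : 0 ≤ 1 + x₁*t := by nlinarith [h₁.1, h₁.2, ht.1, ht.2]
    have b2 : 0 ≤ 1 + x₂*t := by nlinarith [h₂.1, h₂.2, ht.1, ht.2]
    have b3 : 0 ≤ 1 - t^2 := by nlinarith [ht.1, ht.2]
    positivity
  have hB : (∫ t in (0:ℝ)..1, (1-t^2)) ≤ ∫ t in (0:ℝ)..1, (1+x₁*t)^d₁ * (1+x₂*t)^d₂ * (1-t^2) := by
    apply intervalIntegral.integral_mono_on (by norm_num) (Continuous.intervalIntegrable (by fun_prop) _ _) (Continuous.intervalIntegrable (by fun_prop) _ _)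
    intro t ht
    have b1 : (1:ℝ) ≤ 1 + x₁*t := by nlinarith [h₁.1, ht.1]
    have b2 : (1:ℝ) ≤ 1 + x₂*t := by nlinarith [h₂.1, ht.1]
    have b3 : 0 ≤ 1 - t^2 := by nlinarith [ht.1, ht.2]
    calc 1 - t^2 = 1 * 1 * (1-t^2) := by ring
      _ ≤ (1+x₁*t)^d₁ * (1+x₂*t)^d₂ * (1-t^2) := by
          apply mul_le_mul_of_nonneg_right _ b3
          exact mul_le_mul (one_le_pow₀ b1) (one_le_pow₀ b2) (by norm_num) (by positivity)
  have hval : (∫ t in (0:ℝ)..1, (1-t^2)) = 2/3 := by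
    rw [intervalIntegral.integral_sub intervalIntegrable_const (Continuous.intervalIntegrable (by fun_prop) _ _)]
    simp [integral_pow]
    norm_num
  linarith

lemma JJ_le {d₁ d₂ : ℕ} {x₁ x₂ : ℝ} (h₁ : x₁ ∈ Icc (0:ℝ) 1) (h₂ : x₂ ∈ Icc (0:ℝ) 1) :
    JJ d₁ d₂ x₁ x₂ ≤ 2^(d₁+d₂+1) := by
  have hb : ∀ t ∈ Set.uIoc (-1:ℝ) 1, ‖(1+x₁*t)^d₁ * (1+x₂*t)^d₂ * t‖ ≤ 2^(d₁+d₂) := by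
    intro t ht
    rw [Set.uIoc_of_le (by norm_num)] at ht
    have b1 : 0 ≤ 1 + x₁*t := by nlinarith [h₁.1, h₁.2, ht.1, ht.2]
    have b1' : 1 + x₁*t ≤ 2 := by nlinarith [h₁.1, h₁.2, ht.1, ht.2]
    have b2 : 0 ≤ 1 + x₂*t := by nlinarith [h₂.1, h₂.2, ht.1, ht.2]
    have b2' : 1 + x₂*t ≤ 2 := by nlinarith [h₂.1, h₂.2, ht.1, ht.2]
    have htabs : |t| ≤ 1 := abs_le.mpr ⟨ht.1.le, ht.2⟩
    rw [norm_mul, norm_mul, norm_pow, norm_pow, Real.norm_eq_abs, Real.norm_eq_abs,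
      Real.norm_eq_abs, abs_of_nonneg b1, abs_of_nonneg b2, pow_add]
    calc (1+x₁*t)^d₁ * (1+x₂*t)^d₂ * |t| ≤ 2^d₁ * 2^d₂ * 1 := by
          apply mul_le_mul _ htabs (abs_nonneg t) (by positivity)
          exact mul_le_mul (pow_le_pow_left₀ b1 b1' _) (pow_le_pow_left₀ b2 b2' _)
            (by positivity) (by positivity)
      _ = 2^d₁ * 2^d₂ := by ring
  have := intervalIntegral.norm_integral_le_of_norm_le_const hb
  rw [Real.norm_eq_abs] at this
  rw [JJ]
  refine le_trans (le_abs_self _) (le_trans this ?_)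
  rw [pow_succ]
  norm_num


lemma key_ineq (e₁ e₂ : ℕ) {x₁ x₂ : ℝ} (h₁ : x₁ ∈ Icc (0:ℝ) 1) (h₂ : x₂ ∈ Icc (0:ℝ) 1) :
    (((e₁:ℝ)+1)*x₁*(1-x₁) + ((e₂:ℝ)+1)*x₂*(1-x₂)) * II (e₁+1) (e₂+1) x₁ x₂
      ≤ 2 * JJ (e₁+1) (e₂+1) x₁ x₂ := by
  set p' : ℝ → ℝ := fun t =>
    ((e₁:ℝ)+1)*x₁*(1+x₁*t)^e₁*(1+x₂*t)^(e₂+1) + ((e₂:ℝ)+1)*x₂*(1+x₁*t)^(e₁+1)*(1+x₂*t)^e₂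
    with hp'
  have hFTC : (∫ t in (-1:ℝ)..1,
      (p' t * (1-t^2) + (1+x₁*t)^(e₁+1)*(1+x₂*t)^(e₂+1)*(-2*t))) = 0 := by
    rw [intervalIntegral.integral_eq_sub_of_hasDerivAt
      (f := fun t => (1+x₁*t)^(e₁+1)*(1+x₂*t)^(e₂+1)*(1-t^2))
      (fun t _ => by
        have h1 : HasDerivAt (fun t : ℝ => 1+x₁*t) x₁ t := by
          simpa using ((hasDerivAt_id t).const_mul x₁).const_add 1
        have h2 : HasDerivAt (fun t : ℝ => 1+x₂*t) x₂ t := by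
          simpa using ((hasDerivAt_id t).const_mul x₂).const_add 1
        have hA := h1.fun_pow (e₁+1)
        have hB := h2.fun_pow (e₂+1)
        have hw : HasDerivAt (fun t : ℝ => 1-t^2) (-(2*t)) t := by
          simpa using (hasDerivAt_pow 2 t).const_sub 1
        have := (hA.fun_mul hB).fun_mul hw
        refine this.congr_deriv ?_
        simp only [hp', Nat.add_sub_cancel]
        push_cast
        ring)
      (Continuous.intervalIntegrable (by fun_prop) _ _)]
    norm_num
  have hsplit : (∫ t in (-1:ℝ)..1, p' t * (1-t^2))
      = 2 * JJ (e₁+1) (e₂+1) x₁ x₂ := by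
    have hadd := intervalIntegral.integral_add
      (μ := MeasureTheory.volume) (a := (-1:ℝ)) (b := (1:ℝ))
      (f := fun t => p' t * (1-t^2))
      (g := fun t => (1+x₁*t)^(e₁+1)*(1+x₂*t)^(e₂+1)*(-2*t))
      (Continuous.intervalIntegrable (by fun_prop) _ _)
      (Continuous.intervalIntegrable (by fun_prop) _ _)
    rw [hadd] at hFTC
    have hc : (∫ t in (-1:ℝ)..1, (1+x₁*t)^(e₁+1)*(1+x₂*t)^(e₂+1)*(-2*t))
        = -2 * JJ (e₁+1) (e₂+1) x₁ x₂ := by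
      rw [JJ, ← intervalIntegral.integral_const_mul]
      congr 1; funext t; ring
    rw [hc] at hFTC
    linarith
  rw [← hsplit, II, ← intervalIntegral.integral_const_mul]
  apply intervalIntegral.integral_mono_on (by norm_num)
    (Continuous.intervalIntegrable (by fun_prop) _ _)
    (Continuous.intervalIntegrable (by fun_prop) _ _)
  intro t ht
  obtain ⟨hx₁0, hx₁1⟩ := h₁
  obtain ⟨hx₂0, hx₂1⟩ := h₂
  obtain ⟨ht1, ht2⟩ := ht
  have ha : 0 ≤ 1 + x₁*t := by nlinarith
  have hb : 0 ≤ 1 + x₂*t := by nlinarith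
  have hA : 0 ≤ (1+x₁*t)^e₁ := by positivity
  have hB : 0 ≤ (1+x₂*t)^e₂ := by positivity
  have hw : 0 ≤ 1 - t^2 := by nlinarith
  have hf1 : 0 ≤ 1 - (1-x₁)*(1+x₁*t) := by
    nlinarith [mul_nonneg hx₁0 (mul_nonneg (by linarith : (0:ℝ) ≤ 1 - t) (by linarith : (0:ℝ) ≤ 1 - x₁)), sq_nonneg x₁]
  have hf2 : 0 ≤ 1 - (1-x₂)*(1+x₂*t) := by
    nlinarith [mul_nonneg hx₂0 (mul_nonneg (by linarith : (0:ℝ) ≤ 1 - t) (by linarith : (0:ℝ) ≤ 1 - x₂)), sq_nonneg x₂]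
  have key : 0 ≤ (1-t^2) * ((1+x₁*t)^e₁ * (1+x₂*t)^e₂) *
      (((e₁:ℝ)+1)*x₁*(1+x₂*t)*(1 - (1-x₁)*(1+x₁*t))
        + ((e₂:ℝ)+1)*x₂*(1+x₁*t)*(1 - (1-x₂)*(1+x₂*t))) := by
    apply mul_nonneg (mul_nonneg hw (mul_nonneg hA hB))
    apply add_nonneg
    · apply mul_nonneg (mul_nonneg (mul_nonneg (by positivity) hx₁0) hb) hf1
    · apply mul_nonneg (mul_nonneg (mul_nonneg (by positivity) hx₂0) ha) hf2
  have expand : p' t * (1-t^2) -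
      (((e₁:ℝ)+1)*x₁*(1-x₁) + ((e₂:ℝ)+1)*x₂*(1-x₂)) * ((1+x₁*t)^(e₁+1) * (1+x₂*t)^(e₂+1) * (1-t^2))
      = (1-t^2) * ((1+x₁*t)^e₁ * (1+x₂*t)^e₂) *
      (((e₁:ℝ)+1)*x₁*(1+x₂*t)*(1 - (1-x₁)*(1+x₁*t))
        + ((e₂:ℝ)+1)*x₂*(1+x₁*t)*(1 - (1-x₂)*(1+x₂*t))) := by
    simp only [hp', pow_succ]
    ring
  linarith [expand, key]

lemma phi_cont (d₁ d₂ : ℕ) (s₁ s₂ : ℝ) :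
    Continuous (fun r : ℝ => JJ d₁ d₂ (xr s₁ r) (xr s₂ r) - r * II d₁ d₂ (xr s₁ r) (xr s₂ r)) := by
  have c1 : Continuous fun q : ℝ×ℝ => 1 + xr s₁ q.1 * q.2 :=
    (continuous_const.add (((xr_cont s₁).comp continuous_fst).mul continuous_snd))
  have c2 : Continuous fun q : ℝ×ℝ => 1 + xr s₂ q.1 * q.2 :=
    (continuous_const.add (((xr_cont s₂).comp continuous_fst).mul continuous_snd))
  have hJ : Continuous fun r : ℝ => JJ d₁ d₂ (xr s₁ r) (xr s₂ r) := by
    have := intervalIntegral.continuous_parametric_intervalIntegral_of_continuous'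
      (μ := MeasureTheory.volume)
      (f := fun (r : ℝ) (t : ℝ) => (1+xr s₁ r*t)^d₁ * (1+xr s₂ r*t)^d₂ * t)
      (((c1.pow d₁).mul (c2.pow d₂)).mul continuous_snd) (-1) 1
    simpa [JJ] using this
  have hI : Continuous fun r : ℝ => II d₁ d₂ (xr s₁ r) (xr s₂ r) := by
    have := intervalIntegral.continuous_parametric_intervalIntegral_of_continuous'
      (μ := MeasureTheory.volume)
      (f := fun (r : ℝ) (t : ℝ) => (1+xr s₁ r*t)^d₁ * (1+xr s₂ r*t)^d₂ * (1-t^2))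
      (((c1.fun_pow d₁).fun_mul (c2.fun_pow d₂)).fun_mul (by fun_prop : Continuous fun q : ℝ×ℝ => 1 - q.2^2)) (-1) 1
    simpa [II] using this
  exact hJ.sub (continuous_id.mul hI)

set_option maxHeartbeats 1000000 in
theorem stmt19 (d₁ d₂ : ℕ) (hd₁ : 1 ≤ d₁) (hd₂ : 1 ≤ d₂) (hnot : ¬(d₁ = 1 ∧ d₂ = 1))
    (s₁ s₂ : ℝ) (hs₁ : s₁ < 1) (hs₂ : s₂ < 1) :
    ∃ x₁ ∈ Set.Ioo (0:ℝ) 1, ∃ x₂ ∈ Set.Ioo (0:ℝ) 1,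
      (∫ t in (-1:ℝ)..1, (1+x₁*t)^d₁ * (1+x₂*t)^d₂ *
        (x₁*(x₁*s₁-1)*(1-t^2) + t*(1-x₁^2))) = 0 ∧
      (∫ t in (-1:ℝ)..1, (1+x₁*t)^d₁ * (1+x₂*t)^d₂ *
        (x₂*(x₂*s₂-1)*(1-t^2) + t*(1-x₂^2))) = 0 := by
  obtain ⟨e₁, rfl⟩ : ∃ e, d₁ = e + 1 := ⟨d₁ - 1, by omega⟩
  obtain ⟨e₂, rfl⟩ : ∃ e, d₂ = e + 1 := ⟨d₂ - 1, by omega⟩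
  have hd3 : 3 ≤ (e₁+1) + (e₂+1) := by omega
  set Φ : ℝ → ℝ := fun r =>
    JJ (e₁+1) (e₂+1) (xr s₁ r) (xr s₂ r) - r * II (e₁+1) (e₂+1) (xr s₁ r) (xr s₂ r) with hΦ
  set r₀ : ℝ := 1/(20*(1+|s₁|+|s₂|)) with hr₀
  have habs1 : (0:ℝ) ≤ |s₁| := abs_nonneg _
  have habs2 : (0:ℝ) ≤ |s₂| := abs_nonneg _
  have hr₀pos : 0 < r₀ := by rw [hr₀]; positivity
  have hr₀small : r₀ ≤ 1/20 := by
    rw [hr₀, div_le_div_iff₀ (by positivity) (by norm_num)]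
    nlinarith
  have hsm1 : r₀ * (r₀ + |s₁|) ≤ 1/20 := by
    have h1 : r₀ + |s₁| ≤ 1 + |s₁| + |s₂| := by linarith
    have h2 : r₀ * (1 + |s₁| + |s₂|) = 1/20 := by
      rw [hr₀]; field_simp
    nlinarith [mul_le_mul_of_nonneg_left h1 hr₀pos.le]
  have hsm2 : r₀ * (r₀ + |s₂|) ≤ 1/20 := by
    have h1 : r₀ + |s₂| ≤ 1 + |s₁| + |s₂| := by linarith
    have h2 : r₀ * (1 + |s₁| + |s₂|) = 1/20 := by
      rw [hr₀]; field_simp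
    nlinarith [mul_le_mul_of_nonneg_left h1 hr₀pos.le]
  set R : ℝ := 2^((e₁+1)+(e₂+1)+2) with hR
  have hRpos : (0:ℝ) < R := by rw [hR]; positivity
  have hR4 : (4:ℝ) ≤ R := by
    rw [hR]
    calc (4:ℝ) = 2^2 := by norm_num
      _ ≤ 2^((e₁+1)+(e₂+1)+2) := by
          apply pow_le_pow_right₀ (by norm_num)
          omega
  have hr₀R : r₀ ≤ R := by linarith
  -- positivity of Φ at r₀
  have hΦr₀ : 0 < Φ r₀ := by
    set x₁ := xr s₁ r₀ with hx₁
    set x₂ := xr s₂ r₀ with hx₂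
    have hx₁0 : 0 ≤ x₁ := xr_nonneg hr₀pos.le
    have hx₂0 : 0 ≤ x₂ := xr_nonneg hr₀pos.le
    have hx₁1 : x₁ < 1 := xr_lt_one hs₁ hr₀pos.le
    have hx₂1 : x₂ < 1 := xr_lt_one hs₂ hr₀pos.le
    have hx₁le : x₁ ≤ 2*r₀ := xr_le hr₀pos.le
    have hx₂le : x₂ ≤ 2*r₀ := xr_le hr₀pos.le
    have hx₁ge : (20/21)*r₀ ≤ x₁ := xr_ge hs₁ hr₀pos.le hsm1
    have hx₂ge : (20/21)*r₀ ≤ x₂ := xr_ge hs₂ hr₀pos.le hsm2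
    have hII : 0 < II (e₁+1) (e₂+1) x₁ x₂ := II_pos ⟨hx₁0, hx₁1⟩ ⟨hx₂0, hx₂1⟩
    have hkey := key_ineq e₁ e₂ (x₁ := x₁) (x₂ := x₂) ⟨hx₁0, hx₁1.le⟩ ⟨hx₂0, hx₂1.le⟩
    have hq1 : (6/7)*r₀ ≤ x₁*(1-x₁) := by nlinarith
    have hq2 : (6/7)*r₀ ≤ x₂*(1-x₂) := by nlinarith
    have he₁1 : (1:ℝ) ≤ (e₁:ℝ)+1 := by
      have := Nat.cast_nonneg (α := ℝ) e₁; linarith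
    have he₂1 : (1:ℝ) ≤ (e₂:ℝ)+1 := by
      have := Nat.cast_nonneg (α := ℝ) e₂; linarith
    have hd3' : (3:ℝ) ≤ ((e₁:ℝ)+1) + ((e₂:ℝ)+1) := by exact_mod_cast hd3
    have hsum : (18/7)*r₀ ≤ ((e₁:ℝ)+1)*x₁*(1-x₁) + ((e₂:ℝ)+1)*x₂*(1-x₂) := by
      have t1 : ((e₁:ℝ)+1)*((6/7)*r₀) ≤ ((e₁:ℝ)+1)*(x₁*(1-x₁)) :=
        mul_le_mul_of_nonneg_left hq1 (by positivity)
      have t2 : ((e₂:ℝ)+1)*((6/7)*r₀) ≤ ((e₂:ℝ)+1)*(x₂*(1-x₂)) :=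
        mul_le_mul_of_nonneg_left hq2 (by positivity)
      have t3 : (3:ℝ)*((6/7)*r₀) ≤ (((e₁:ℝ)+1)+((e₂:ℝ)+1))*((6/7)*r₀) :=
        mul_le_mul_of_nonneg_right hd3' (by positivity)
      nlinarith [t1, t2, t3]
    have h2J : (18/7)*r₀ * II (e₁+1) (e₂+1) x₁ x₂ ≤ 2 * JJ (e₁+1) (e₂+1) x₁ x₂ := by
      calc (18/7)*r₀ * II (e₁+1) (e₂+1) x₁ x₂
          ≤ (((e₁:ℝ)+1)*x₁*(1-x₁) + ((e₂:ℝ)+1)*x₂*(1-x₂)) * II (e₁+1) (e₂+1) x₁ x₂ :=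
            mul_le_mul_of_nonneg_right hsum hII.le
        _ ≤ 2 * JJ (e₁+1) (e₂+1) x₁ x₂ := hkey
    have : 0 < JJ (e₁+1) (e₂+1) x₁ x₂ - r₀ * II (e₁+1) (e₂+1) x₁ x₂ := by
      nlinarith [mul_pos hr₀pos hII]
    simpa [hΦ] using this
  -- negativity of Φ at R
  have hΦR : Φ R < 0 := by
    set x₁ := xr s₁ R with hx₁
    set x₂ := xr s₂ R with hx₂
    have hx₁0 : 0 ≤ x₁ := xr_nonneg hRpos.le
    have hx₂0 : 0 ≤ x₂ := xr_nonneg hRpos.le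
    have hx₁1 : x₁ < 1 := xr_lt_one hs₁ hRpos.le
    have hx₂1 : x₂ < 1 := xr_lt_one hs₂ hRpos.le
    have hII := II_ge (d₁ := e₁+1) (d₂ := e₂+1) ⟨hx₁0, hx₁1.le⟩ ⟨hx₂0, hx₂1.le⟩
    have hJJ := JJ_le (d₁ := e₁+1) (d₂ := e₂+1) ⟨hx₁0, hx₁1.le⟩ ⟨hx₂0, hx₂1.le⟩
    have hRe : R = 2 * 2^((e₁+1)+(e₂+1)+1) := by
      rw [hR, pow_succ]; ring
    have : JJ (e₁+1) (e₂+1) x₁ x₂ - R * II (e₁+1) (e₂+1) x₁ x₂ < 0 := by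
      have hp : (0:ℝ) < 2^((e₁+1)+(e₂+1)+1) := by positivity
      nlinarith
    simpa [hΦ] using this
  -- IVT
  have hΦc : ContinuousOn Φ (Icc r₀ R) := (phi_cont (e₁+1) (e₂+1) s₁ s₂).continuousOn
  have h0mem : (0:ℝ) ∈ Icc (Φ R) (Φ r₀) := ⟨hΦR.le, hΦr₀.le⟩
  obtain ⟨r, hrmem, hΦr⟩ := intermediate_value_Icc' hr₀R hΦc h0mem
  have hrpos : 0 < r := lt_of_lt_of_le hr₀pos hrmem.1
  refine ⟨xr s₁ r, ⟨xr_pos hs₁ hrpos, xr_lt_one hs₁ hrpos.le⟩,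
          xr s₂ r, ⟨xr_pos hs₂ hrpos, xr_lt_one hs₂ hrpos.le⟩, ?_, ?_⟩
  · set x₁ := xr s₁ r with hx₁
    set x₂ := xr s₂ r with hx₂
    have hid : (∫ t in (-1:ℝ)..1, (1+x₁*t)^(e₁+1) * (1+x₂*t)^(e₂+1) *
        (x₁*(x₁*s₁-1)*(1-t^2) + t*(1-x₁^2)))
        = (1-x₁^2) * JJ (e₁+1) (e₂+1) x₁ x₂ - (x₁*(1-s₁*x₁)) * II (e₁+1) (e₂+1) x₁ x₂ := by
      rw [II, JJ, ← intervalIntegral.integral_const_mul, ← intervalIntegral.integral_const_mul,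
        ← intervalIntegral.integral_sub (Continuous.intervalIntegrable (by fun_prop) _ _)
          (Continuous.intervalIntegrable (by fun_prop) _ _)]
      congr 1; funext t; ring
    rw [hid]
    have hspec : x₁ * (1 - s₁ * x₁) = r * (1 - x₁^2) := xr_spec hs₁ hrpos.le
    have hΦr' : JJ (e₁+1) (e₂+1) x₁ x₂ = r * II (e₁+1) (e₂+1) x₁ x₂ := by
      have := hΦr
      simp only [hΦ] at this
      linarith [this]
    rw [hspec, hΦr']
    ring
  · set x₁ := xr s₁ r with hx₁
    set x₂ := xr s₂ r with hx₂
    have hid : (∫ t in (-1:ℝ)..1, (1+x₁*t)^(e₁+1) * (1+x₂*t)^(e₂+1) *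
        (x₂*(x₂*s₂-1)*(1-t^2) + t*(1-x₂^2)))
        = (1-x₂^2) * JJ (e₁+1) (e₂+1) x₁ x₂ - (x₂*(1-s₂*x₂)) * II (e₁+1) (e₂+1) x₁ x₂ := by
      rw [II, JJ, ← intervalIntegral.integral_const_mul, ← intervalIntegral.integral_const_mul,
        ← intervalIntegral.integral_sub (Continuous.intervalIntegrable (by fun_prop) _ _)
          (Continuous.intervalIntegrable (by fun_prop) _ _)]
      congr 1; funext t; ring
    rw [hid]
    have hspec : x₂ * (1 - s₂ * x₂) = r * (1 - x₂^2) := xr_spec hs₂ hrpos.le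
    have hΦr' : JJ (e₁+1) (e₂+1) x₁ x₂ = r * II (e₁+1) (e₂+1) x₁ x₂ := by
      have := hΦr
      simp only [hΦ] at this
      linarith [this]
    rw [hspec, hΦr']
    ring
end
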